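/- Lemma 5.6 (boundary term, quantitative core): For all y > 0 and all ε > 0, |∫₀^∞ p_ε(x) (∫_x^∞ G_ε(z,y) dz) dx − 1/2| ≤ 3 e^{−y²/(16ε)}. In particular, for every y > 0, ∫₀^∞ p_ε(x) (∫_x^∞ G_ε(z,y) dz) dx → 1/2 as ε ↓ 0. -/

import Mathlib

open MeasureTheory Set Filter Topology

/-- The Gaussian kernel `p_ε(x) = (2πε)^{-1/2} exp(-x²/(2ε))`. -/
noncomputable def pker (ε x : ℝ) : ℝ :=
  (Real.sqrt (2 * Real.pi * ε))⁻¹ * Real.exp (-(x ^ 2) / (2 * ε))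

/-- The Dirichlet heat kernel on the half-line `G_ε(x,y) = p_ε(x-y) - p_ε(x+y)`. -/
noncomputable def Gker (ε x y : ℝ) : ℝ := pker ε (x - y) - pker ε (x + y)

namespace BTQaux

/-- Gaussian tail `Q ε a = ∫_{x ≥ a} p_ε(x) dx`. -/
noncomputable def Q (ε a : ℝ) : ℝ := ∫ x in Ici a, pker ε x

lemma pker_nonneg (ε x : ℝ) : 0 ≤ pker ε x := by
  unfold pker; positivity

lemma pker_fun_eq (ε : ℝ) :
    pker ε = fun x => (Real.sqrt (2 * Real.pi * ε))⁻¹ *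
      Real.exp (-(1 / (2 * ε)) * x ^ 2) := by
  funext x
  unfold pker
  congr 2
  ring

lemma integrable_pker {ε : ℝ} (hε : 0 < ε) : Integrable (pker ε) := by
  rw [pker_fun_eq]
  exact (integrable_exp_neg_mul_sq (by positivity)).const_mul _

lemma measurable_pker (ε : ℝ) : Measurable (pker ε) := by
  unfold pker; fun_prop

lemma integral_pker {ε : ℝ} (hε : 0 < ε) : ∫ x, pker ε x = 1 := by
  rw [pker_fun_eq, MeasureTheory.integral_const_mul, integral_gaussian,
    show Real.pi / (1 / (2 * ε)) = 2 * Real.pi * ε by field_simp]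
  exact inv_mul_cancel₀ (ne_of_gt (Real.sqrt_pos.2 (by positivity)))

lemma Q_nonneg (ε a : ℝ) : 0 ≤ Q ε a :=
  setIntegral_nonneg measurableSet_Ici fun x _ => pker_nonneg ε x

lemma Q_le_one {ε : ℝ} (hε : 0 < ε) (a : ℝ) : Q ε a ≤ 1 := by
  rw [← integral_pker hε]
  exact setIntegral_le_integral (integrable_pker hε)
    (Eventually.of_forall (pker_nonneg ε))

lemma Q_anti {ε : ℝ} (hε : 0 < ε) : Antitone (Q ε) := fun a b hab =>
  setIntegral_mono_set (integrable_pker hε).integrableOn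
    (Eventually.of_forall fun x => pker_nonneg ε x)
    (HasSubset.Subset.eventuallyLE (Ici_subset_Ici.2 hab))

lemma Q_neg {ε : ℝ} (hε : 0 < ε) (a : ℝ) : Q ε (-a) = 1 - Q ε a := by
  have h1 : Q ε (-a) = ∫ x in Iic a, pker ε x := by
    have hcn := integral_comp_neg_Ioi (-a) (pker ε)
    rw [neg_neg] at hcn
    rw [Q, integral_Ici_eq_integral_Ioi, ← hcn]
    congr 1
    funext x
    simp [pker, neg_sq]
  have h2 : (∫ x in Iic a, pker ε x) + (∫ x in Ioi a, pker ε x) = 1 := by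
    rw [intervalIntegral.integral_Iic_add_Ioi (integrable_pker hε).integrableOn
      (integrable_pker hε).integrableOn, integral_pker hε]
  have h3 : Q ε a = ∫ x in Ioi a, pker ε x := integral_Ici_eq_integral_Ioi
  linarith [h1, h2, h3]

lemma Q_zero {ε : ℝ} (hε : 0 < ε) : Q ε 0 = 1 / 2 := by
  have := Q_neg hε 0
  rw [neg_zero] at this
  linarith

lemma Q_shift {ε : ℝ} (hε : 0 < ε) (a b : ℝ) :
    ∫ z in Ici a, pker ε (z - b) = Q ε (a - b) := by
  have h1 : ∫ z in Ici a, pker ε (z - b)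
      = ∫ z, (Ici a).indicator (fun z => pker ε (z - b)) z :=
    (integral_indicator measurableSet_Ici).symm
  have h2 : (Ici a).indicator (fun z => pker ε (z - b))
      = fun z => (Ici (a - b)).indicator (pker ε) (z - b) := by
    funext z
    simp only [indicator_apply, mem_Ici, sub_le_sub_iff_right]
  rw [h1, h2, integral_sub_right_eq_self ((Ici (a - b)).indicator (pker ε)) b,
    integral_indicator measurableSet_Ici]
  rfl

lemma Q_shift' {ε : ℝ} (hε : 0 < ε) (a b : ℝ) :
    ∫ z in Ici a, pker ε (z + b) = Q ε (a + b) := by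
  have := Q_shift hε a (-b)
  simpa [sub_neg_eq_add] using this

lemma Q_tail {ε : ℝ} (hε : 0 < ε) {a : ℝ} (ha : 0 ≤ a) :
    Q ε a ≤ Real.exp (-(a ^ 2) / (2 * ε)) / 2 := by
  set E := Real.exp (-(a ^ 2) / (2 * ε)) with hE
  have key : ∀ x ∈ Ici a, pker ε x ≤ E * pker ε (x - a) := by
    intro x hx
    simp only [mem_Ici] at hx
    unfold pker
    rw [hE, show E * ((Real.sqrt (2 * Real.pi * ε))⁻¹ *
        Real.exp (-((x - a) ^ 2) / (2 * ε)))
      = (Real.sqrt (2 * Real.pi * ε))⁻¹ *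
        (Real.exp (-(a ^ 2) / (2 * ε)) * Real.exp (-((x - a) ^ 2) / (2 * ε))) by
        rw [hE]; ring, ← Real.exp_add]
    have hle : -(x ^ 2) / (2 * ε) ≤ -(a ^ 2) / (2 * ε) + -((x - a) ^ 2) / (2 * ε) := by
      rw [← add_div, div_le_div_iff_of_pos_right (by positivity)]
      nlinarith [mul_nonneg ha (sub_nonneg.2 hx)]
    exact mul_le_mul_of_nonneg_left (Real.exp_le_exp.2 hle) (by positivity)
  have h1 : Q ε a ≤ ∫ x in Ici a, E * pker ε (x - a) := by
    refine setIntegral_mono_on (integrable_pker hε).integrableOn ?_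
      measurableSet_Ici key
    exact (((integrable_pker hε).comp_sub_right a).const_mul E).integrableOn
  have h2 : ∫ x in Ici a, E * pker ε (x - a) = E * Q ε 0 := by
    rw [MeasureTheory.integral_const_mul, Q_shift hε a a, sub_self]
  rw [h2, Q_zero hε] at h1
  linarith

lemma exp_div_mono {ε c d y : ℝ} (hε : 0 < ε) (hcd : 0 < c) (hc : c ≤ d) :
    Real.exp (-(y ^ 2) / (c * ε)) ≤ Real.exp (-(y ^ 2) / (d * ε)) := by
  apply Real.exp_le_exp.2
  rw [neg_div, neg_div, neg_le_neg_iff]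
  apply div_le_div_of_nonneg_left (by positivity) (by positivity)
  · nlinarith

lemma inner_eq {ε : ℝ} (hε : 0 < ε) (y x : ℝ) :
    ∫ z in Ici x, Gker ε z y = Q ε (x - y) - Q ε (x + y) := by
  unfold Gker
  rw [integral_sub ((integrable_pker hε).comp_sub_right y).integrableOn
      ((integrable_pker hε).comp_add_right y).integrableOn,
    Q_shift hε x y, Q_shift' hε x y]

/-- The quantitative bound. -/
lemma main_bound {y ε : ℝ} (hy : 0 < y) (hε : 0 < ε) :
    |(∫ x in Ioi (0 : ℝ), pker ε x * ∫ z in Ici x, Gker ε z y) - 1 / 2|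
      ≤ 3 * Real.exp (-(y ^ 2) / (16 * ε)) := by
  set F : ℝ → ℝ := fun x => Q ε (x - y) - Q ε (x + y) with hF
  have hrw : (fun x => pker ε x * ∫ z in Ici x, Gker ε z y)
      = fun x => pker ε x * F x := by
    funext x; rw [inner_eq hε y x]
  have hF01 : ∀ x : ℝ, 0 ≤ F x ∧ F x ≤ 1 := by
    intro x
    constructor
    · exact sub_nonneg.2 (Q_anti hε (by linarith))
    · have := Q_nonneg ε (x + y)
      have := Q_le_one hε (x - y)
      simp only [hF]; linarith
  have hFmeas : Measurable F := by
    exact ((Q_anti hε).measurable.comp (measurable_id.sub measurable_const)).sub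
      ((Q_anti hε).measurable.comp (measurable_id.add measurable_const))
  have hpF_int : IntegrableOn (fun x => pker ε x * F x) (Ioi 0) := by
    refine (Integrable.mono (integrable_pker hε)
      ((measurable_pker ε).mul hFmeas).aestronglyMeasurable ?_).integrableOn
    refine Eventually.of_forall fun x => ?_
    rw [Real.norm_eq_abs, Real.norm_eq_abs, Pi.mul_apply, abs_mul,
      abs_of_nonneg (pker_nonneg ε x), abs_of_nonneg (hF01 x).1]
    nlinarith [pker_nonneg ε x, (hF01 x).2]
  have hhalf : (∫ x in Ioi (0 : ℝ), pker ε x) = 1 / 2 := by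
    rw [← integral_Ici_eq_integral_Ioi]
    exact Q_zero hε
  set E8 := Real.exp (-(y ^ 2) / (8 * ε)) with hE8
  -- the difference is -∫ p (1 - F)
  have hdiff : (∫ x in Ioi (0 : ℝ), pker ε x * F x) - 1 / 2
      = -(∫ x in Ioi (0 : ℝ), pker ε x * (1 - F x)) := by
    have : (∫ x in Ioi (0 : ℝ), pker ε x * (1 - F x))
        = (∫ x in Ioi (0 : ℝ), pker ε x) - ∫ x in Ioi (0 : ℝ), pker ε x * F x := by
      rw [← integral_sub (integrable_pker hε).integrableOn hpF_int]
      congr 1; funext x; ring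
    rw [this, hhalf]; ring
  -- the dominating function
  set h : ℝ → ℝ := fun x => E8 * pker ε x + (Ioi (y / 2)).indicator (pker ε) x with hh
  have hint : IntegrableOn h (Ioi 0) := by
    exact (((integrable_pker hε).const_mul E8).add
      ((integrable_pker hε).indicator measurableSet_Ioi)).integrableOn
  have hg_int : IntegrableOn (fun x => pker ε x * (1 - F x)) (Ioi 0) := by
    have : (fun x => pker ε x * (1 - F x))
        = fun x => pker ε x - pker ε x * F x := by funext x; ring
    rw [this]
    exact (integrable_pker hε).integrableOn.sub hpF_int
  have hbound : ∀ x ∈ Ioi (0 : ℝ), pker ε x * (1 - F x) ≤ h x := by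
    intro x hx
    simp only [mem_Ioi] at hx
    by_cases hxy : x ≤ y / 2
    · -- small x : 1 - F x ≤ E8
      have h1F : 1 - F x ≤ E8 := by
        have hQ1 : Q ε (x - y) = 1 - Q ε (y - x) := by
          rw [show x - y = -(y - x) by ring, Q_neg hε]
        have hQ2 : Q ε (y - x) ≤ Q ε (y / 2) := Q_anti hε (by linarith)
        have hQ3 : Q ε (y / 2) ≤ Real.exp (-((y / 2) ^ 2) / (2 * ε)) / 2 :=
          Q_tail hε (by linarith)
        have hQ4 : Real.exp (-((y / 2) ^ 2) / (2 * ε)) = E8 := by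
          rw [hE8]; congr 1; ring
        have hQ5 : Q ε (x + y) ≤ Q ε y := Q_anti hε (by linarith)
        have hQ6 : Q ε y ≤ Real.exp (-(y ^ 2) / (2 * ε)) / 2 :=
          Q_tail hε (by linarith)
        have hQ7 : Real.exp (-(y ^ 2) / (2 * ε)) ≤ E8 :=
          exp_div_mono hε (by norm_num) (by norm_num)
        simp only [hF]
        rw [hQ4] at hQ3
        linarith
      have : pker ε x * (1 - F x) ≤ E8 * pker ε x := by
        nlinarith [pker_nonneg ε x, (hF01 x).2]
      refine le_trans this ?_
      simp only [hh]
      have : 0 ≤ (Ioi (y / 2)).indicator (pker ε) x :=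
        indicator_nonneg (fun z _ => pker_nonneg ε z) x
      linarith
    · -- large x
      push_neg at hxy
      have h1 : pker ε x * (1 - F x) ≤ pker ε x := by
        nlinarith [pker_nonneg ε x, (hF01 x).1]
      have h2 : (Ioi (y / 2)).indicator (pker ε) x = pker ε x :=
        indicator_of_mem hxy _
      simp only [hh, h2]
      have : 0 ≤ E8 * pker ε x := by
        have := pker_nonneg ε x
        positivity
      linarith
  have hints : (∫ x in Ioi (0 : ℝ), h x) ≤ E8 := by
    have hsplit : (∫ x in Ioi (0 : ℝ), h x)
        = E8 * (∫ x in Ioi (0 : ℝ), pker ε x)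
          + ∫ x in Ioi (0 : ℝ) ∩ Ioi (y / 2), pker ε x := by
      simp only [hh]
      rw [integral_add (((integrable_pker hε).const_mul E8).integrableOn)
        (((integrable_pker hε).indicator measurableSet_Ioi).integrableOn),
        MeasureTheory.integral_const_mul, setIntegral_indicator measurableSet_Ioi]
    have hset : Ioi (0 : ℝ) ∩ Ioi (y / 2) = Ioi (y / 2) := by
      rw [Ioi_inter_Ioi, sup_eq_right.2 (by linarith)]
    have htail : (∫ x in Ioi (y / 2), pker ε x) ≤ E8 / 2 := by
      have := Q_tail hε (a := y / 2) (by linarith)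
      have heq : Real.exp (-((y / 2) ^ 2) / (2 * ε)) = E8 := by
        rw [hE8]; congr 1; ring
      rw [heq] at this
      calc (∫ x in Ioi (y / 2), pker ε x) = Q ε (y / 2) :=
            integral_Ici_eq_integral_Ioi.symm
        _ ≤ E8 / 2 := this
    rw [hsplit, hhalf, hset]
    linarith
  have habs : |(∫ x in Ioi (0 : ℝ), pker ε x * F x) - 1 / 2| ≤ E8 := by
    rw [hdiff, abs_neg, abs_of_nonneg (setIntegral_nonneg measurableSet_Ioi
      fun x _ => by nlinarith [pker_nonneg ε x, (hF01 x).2])]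
    calc (∫ x in Ioi (0 : ℝ), pker ε x * (1 - F x))
        ≤ ∫ x in Ioi (0 : ℝ), h x :=
          setIntegral_mono_on hg_int hint measurableSet_Ioi hbound
      _ ≤ E8 := hints
  rw [hrw]
  refine habs.trans ?_
  have h16 : E8 ≤ Real.exp (-(y ^ 2) / (16 * ε)) :=
    exp_div_mono hε (by norm_num) (by norm_num)
  nlinarith [Real.exp_pos (-(y ^ 2) / (16 * ε))]

end BTQaux

/-- Lemma 5.6 (boundary term, quantitative core): for all `y > 0` and `ε > 0`,
`|∫₀^∞ p_ε(x) (∫_x^∞ G_ε(z,y) dz) dx - 1/2| ≤ 3 e^{-y²/(16ε)}`; in particular,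
for every `y > 0` the integral tends to `1/2` as `ε ↓ 0`. -/
theorem boundary_term_quantitative :
    (∀ y > (0 : ℝ), ∀ ε > (0 : ℝ),
      |(∫ x in Ioi (0 : ℝ), pker ε x * ∫ z in Ici x, Gker ε z y) - 1 / 2|
        ≤ 3 * Real.exp (-(y ^ 2) / (16 * ε))) ∧
    (∀ y > (0 : ℝ),
      Tendsto (fun ε => ∫ x in Ioi (0 : ℝ), pker ε x * ∫ z in Ici x, Gker ε z y)
        (𝓝[>] (0 : ℝ)) (𝓝 (1 / 2))) := by
  constructor
  · intro y hy ε hε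
    exact BTQaux.main_bound hy hε
  · intro y hy
    rw [tendsto_iff_norm_sub_tendsto_zero]
    have hexp : Tendsto (fun ε : ℝ => 3 * Real.exp (-(y ^ 2) / (16 * ε)))
        (𝓝[>] (0 : ℝ)) (𝓝 0) := by
      have h1 : Tendsto (fun ε : ℝ => -(y ^ 2 / 16) * ε⁻¹) (𝓝[>] (0 : ℝ)) atBot := by
        have hneg : -(y ^ 2 / 16) < 0 := by
          have : 0 < y ^ 2 / 16 := by positivity
          linarith
        exact Tendsto.const_mul_atTop_of_neg hneg tendsto_inv_nhdsGT_zero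
      have h2 : Tendsto (fun ε : ℝ => Real.exp (-(y ^ 2 / 16) * ε⁻¹))
          (𝓝[>] (0 : ℝ)) (𝓝 0) := Real.tendsto_exp_atBot.comp h1
      have h3 := h2.const_mul (3 : ℝ)
      rw [mul_zero] at h3
      convert h3 using 2 with ε
      congr 1
      ring
    refine squeeze_zero' (Eventually.of_forall fun ε => norm_nonneg _) ?_ hexp
    filter_upwards [self_mem_nhdsWithin] with ε hε
    rw [Real.norm_eq_abs]
    exact BTQaux.main_bound hy hε
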